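/- Kurtosis implies fourth-moment operator bound: if a random vector x in ℝ^d with covariance Σ = E[x⊗x] satisfies E⟨z,x⟩⁴ ≤ κ⟨z,Σz⟩² for all z ∈ ℝ^d, then for all symmetric positive semidefinite matrices M, N, E[⟨x,Mx⟩⟨x,Nx⟩] ≤ κ tr(MΣ) tr(NΣ); in particular E[⟨x,Mx⟩ x⊗x] ⪯ κ tr(MΣ) Σ. -/

import Mathlib

open Matrix MeasureTheory
open scoped ENNReal

private lemma quad_form_eq' {d : ℕ} (B : Matrix (Fin d) (Fin d) ℝ) (y : Fin d → ℝ) :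
    y ⬝ᵥ (Bᴴ * B).mulVec y = ∑ i, (B i ⬝ᵥ y) ^ 2 := by
  rw [← Matrix.mulVec_mulVec, Matrix.dotProduct_mulVec,
    show Bᴴ = Bᵀ by ext i j; simp [Matrix.conjTranspose_apply], Matrix.vecMul_transpose]
  simp [dotProduct, Matrix.mulVec, pow_two]

private lemma trace_eq' {d : ℕ} (B Sig : Matrix (Fin d) (Fin d) ℝ) :
    ((Bᴴ * B) * Sig).trace = ∑ i, (B i ⬝ᵥ Sig.mulVec (B i)) := by
  rw [mul_assoc, Matrix.trace_mul_comm]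
  simp only [Matrix.trace, Matrix.diag, Matrix.mul_apply, Matrix.conjTranspose_apply,
    star_trivial, dotProduct, Matrix.mulVec, Finset.mul_sum, Finset.sum_mul]
  refine Finset.sum_congr rfl fun i _ => ?_
  rw [Finset.sum_comm]
  refine Finset.sum_congr rfl fun j _ => Finset.sum_congr rfl fun k _ => ?_
  ring

private lemma half_add_half : (1:ℝ≥0∞)/2 = 1/4 + 1/4 := by
  refine (ENNReal.toReal_eq_toReal_iff' (by norm_num) (by norm_num)).mp ?_
  rw [ENNReal.toReal_add (by norm_num) (by norm_num)]; simp [ENNReal.toReal_inv]; norm_num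

private lemma one_add : (1:ℝ≥0∞)/1 = 1/2 + 1/2 := by
  refine (ENNReal.toReal_eq_toReal_iff' (by norm_num) (by norm_num)).mp ?_
  rw [ENNReal.toReal_add (by norm_num) (by norm_num)]; simp [ENNReal.toReal_inv]; norm_num

private lemma cs4 {Ω : Type*} [MeasurableSpace Ω] (P : Measure Ω) [IsProbabilityMeasure P]
    (f g : Ω → ℝ) (hf : MemLp f 4 P) (hg : MemLp g 4 P) :
    ∫ ω, f ω ^ 2 * g ω ^ 2 ∂P
      ≤ (∫ ω, f ω ^ 4 ∂P) ^ ((1:ℝ)/2) * (∫ ω, g ω ^ 4 ∂P) ^ ((1:ℝ)/2) := by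
  have hpq : Real.HolderConjugate 2 2 := by constructor <;> norm_num
  have hf2 : MemLp (fun ω => f ω ^ 2) 2 P := by
    have h := hf.smul hf (p := 4) (q := 4) (r := 2) (hpqr := ⟨by simpa [one_div] using half_add_half.symm⟩)
    simpa [Pi.smul_def, Pi.mul_def, smul_eq_mul, pow_two] using h
  have hg2 : MemLp (fun ω => g ω ^ 2) 2 P := by
    have h := hg.smul hg (p := 4) (q := 4) (r := 2) (hpqr := ⟨by simpa [one_div] using half_add_half.symm⟩)
    simpa [Pi.smul_def, Pi.mul_def, smul_eq_mul, pow_two] using h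
  have h := integral_mul_le_Lp_mul_Lq_of_nonneg (μ := P) hpq
      (Filter.Eventually.of_forall fun ω => sq_nonneg (f ω))
      (Filter.Eventually.of_forall fun ω => sq_nonneg (g ω))
      (by simpa using hf2) (by simpa using hg2)
  have e : ∀ f : Ω → ℝ, (∫ ω, (f ω ^ 2 : ℝ) ^ (2:ℝ) ∂P) = ∫ ω, f ω ^ 4 ∂P := fun f =>
    integral_congr_ae (Filter.Eventually.of_forall fun a => by
      show ((f a ^ 2 : ℝ)) ^ (2:ℝ) = f a ^ 4; rw [Real.rpow_two]; ring)
  rw [← e f, ← e g]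
  convert h using 2 <;> norm_num

theorem stmt_17 {d : ℕ} {Ω : Type*} [MeasurableSpace Ω]
    (P : Measure Ω) [IsProbabilityMeasure P]
    (x : Ω → Fin d → ℝ)
    (hxmeas : ∀ i, AEStronglyMeasurable (fun ω => x ω i) P)
    (hx4 : ∀ i, MemLp (fun ω => x ω i) 4 P)
    (Sig : Matrix (Fin d) (Fin d) ℝ)
    (hSig : ∀ i j, Sig i j = ∫ ω, x ω i * x ω j ∂P)
    (κ : ℝ) (hκ : 0 < κ)
    (hkurt : ∀ z : Fin d → ℝ, ∫ ω, (z ⬝ᵥ x ω) ^ 4 ∂P ≤ κ * (z ⬝ᵥ Sig.mulVec z) ^ 2) :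
    (∀ M N : Matrix (Fin d) (Fin d) ℝ, M.PosSemidef → N.PosSemidef →
      ∫ ω, (x ω ⬝ᵥ M.mulVec (x ω)) * (x ω ⬝ᵥ N.mulVec (x ω)) ∂P
        ≤ κ * (M * Sig).trace * (N * Sig).trace)
    ∧ ∀ M : Matrix (Fin d) (Fin d) ℝ, M.PosSemidef → ∀ z : Fin d → ℝ,
      ∫ ω, (x ω ⬝ᵥ M.mulVec (x ω)) * (z ⬝ᵥ x ω) ^ 2 ∂P
        ≤ κ * (M * Sig).trace * (z ⬝ᵥ Sig.mulVec z) := by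
  -- membership of linear marginals in L⁴
  have hmem : ∀ u : Fin d → ℝ, MemLp (fun ω => u ⬝ᵥ x ω) 4 P := by
    intro u
    have h := memLp_finset_sum' (μ := P) (p := 4) Finset.univ
        (f := fun i (ω : Ω) => u i * x ω i) (fun i _ => (hx4 i).const_mul (u i))
    have e : (∑ i : Fin d, fun ω => u i * x ω i) = fun ω => u ⬝ᵥ x ω := by
      funext ω; simp [dotProduct]
    rwa [e] at h
  have hsq : ∀ u : Fin d → ℝ, MemLp (fun ω => (u ⬝ᵥ x ω) ^ 2) 2 P := by
    intro u
    have h := (hmem u).smul (hmem u) (p := 4) (q := 4) (r := 2) (hpqr := ⟨by simpa [one_div] using half_add_half.symm⟩)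
    simpa [Pi.smul_def, Pi.mul_def, smul_eq_mul, pow_two] using h
  have hint2 : ∀ u v : Fin d → ℝ,
      Integrable (fun ω => (u ⬝ᵥ x ω) ^ 2 * (v ⬝ᵥ x ω) ^ 2) P := by
    intro u v
    have h := (hsq u).smul (hsq v) (p := 2) (q := 2) (r := 1) (hpqr := ⟨by simpa [one_div] using one_add.symm⟩)
    rw [memLp_one_iff_integrable] at h
    simpa [Pi.smul_def, Pi.mul_def, smul_eq_mul, mul_comm] using h
  have hxij : ∀ i j, Integrable (fun ω => x ω i * x ω j) P := by
    intro i j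
    have h := (hx4 i).smul (hx4 j) (p := 4) (q := 4) (r := 2) (hpqr := ⟨by simpa [one_div] using half_add_half.symm⟩)
    have h2 : MemLp (fun ω => x ω i * x ω j) 2 P := by
      simpa [Pi.smul_def, Pi.mul_def, smul_eq_mul, mul_comm] using h
    exact h2.integrable (by norm_num)
  -- the quadratic form of Sig is a second moment
  have hSigq : ∀ u : Fin d → ℝ, u ⬝ᵥ Sig.mulVec u = ∫ ω, (u ⬝ᵥ x ω) ^ 2 ∂P := by
    intro u
    have e : (fun ω => (u ⬝ᵥ x ω) ^ 2)
        = fun ω => ∑ i, ∑ j, (u i * u j) * (x ω i * x ω j) := by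
      funext ω
      rw [pow_two, dotProduct, Finset.sum_mul_sum]
      exact Finset.sum_congr rfl fun i _ => Finset.sum_congr rfl fun j _ => by ring
    rw [e, integral_finset_sum _
      (fun i _ => integrable_finset_sum _ (fun j _ => (hxij i j).const_mul _))]
    have e2 : ∀ i, (∫ ω, ∑ j, (u i * u j) * (x ω i * x ω j) ∂P)
        = ∑ j, u i * u j * Sig i j := by
      intro i
      rw [integral_finset_sum _ (fun j _ => (hxij i j).const_mul _)]
      exact Finset.sum_congr rfl fun j _ => by rw [integral_const_mul, ← hSig i j]
    rw [Finset.sum_congr rfl fun i _ => e2 i]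
    simp only [dotProduct, Matrix.mulVec, Finset.mul_sum]
    exact Finset.sum_congr rfl fun i _ => Finset.sum_congr rfl fun j _ => by ring
  have hSnn : ∀ u : Fin d → ℝ, 0 ≤ u ⬝ᵥ Sig.mulVec u := by
    intro u
    rw [hSigq u]
    exact integral_nonneg fun ω => sq_nonneg _
  -- the key rank-one estimate
  have key : ∀ u v : Fin d → ℝ,
      ∫ ω, (u ⬝ᵥ x ω) ^ 2 * (v ⬝ᵥ x ω) ^ 2 ∂P
        ≤ κ * ((u ⬝ᵥ Sig.mulVec u) * (v ⬝ᵥ Sig.mulVec v)) := by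
    intro u v
    have hquarter : ∀ w : Fin d → ℝ,
        (∫ ω, (w ⬝ᵥ x ω) ^ 4 ∂P) ^ ((1:ℝ)/2) ≤ κ ^ ((1:ℝ)/2) * (w ⬝ᵥ Sig.mulVec w) := by
      intro w
      have h1 : (∫ ω, (w ⬝ᵥ x ω) ^ 4 ∂P) ^ ((1:ℝ)/2)
          ≤ (κ * (w ⬝ᵥ Sig.mulVec w) ^ 2) ^ ((1:ℝ)/2) :=
        Real.rpow_le_rpow (integral_nonneg fun ω => by positivity)
          (hkurt w) (by norm_num)
      have h2 : (κ * (w ⬝ᵥ Sig.mulVec w) ^ 2) ^ ((1:ℝ)/2)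
          = κ ^ ((1:ℝ)/2) * (w ⬝ᵥ Sig.mulVec w) := by
        rw [Real.mul_rpow hκ.le (sq_nonneg _)]
        congr 1
        rw [← Real.rpow_natCast (w ⬝ᵥ Sig.mulVec w) 2, ← Real.rpow_mul (hSnn w)]
        norm_num
      rw [h2] at h1; exact h1
    calc ∫ ω, (u ⬝ᵥ x ω) ^ 2 * (v ⬝ᵥ x ω) ^ 2 ∂P
        ≤ (∫ ω, (u ⬝ᵥ x ω) ^ 4 ∂P) ^ ((1:ℝ)/2) * (∫ ω, (v ⬝ᵥ x ω) ^ 4 ∂P) ^ ((1:ℝ)/2) :=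
          cs4 P _ _ (hmem u) (hmem v)
      _ ≤ (κ ^ ((1:ℝ)/2) * (u ⬝ᵥ Sig.mulVec u)) * (κ ^ ((1:ℝ)/2) * (v ⬝ᵥ Sig.mulVec v)) := by
          apply mul_le_mul (hquarter u) (hquarter v)
            (Real.rpow_nonneg (integral_nonneg fun ω => by positivity) _)
          exact mul_nonneg (Real.rpow_nonneg hκ.le _) (hSnn u)
      _ = κ * ((u ⬝ᵥ Sig.mulVec u) * (v ⬝ᵥ Sig.mulVec v)) := by
          rw [show κ ^ ((1:ℝ)/2) * (u ⬝ᵥ Sig.mulVec u) * (κ ^ ((1:ℝ)/2) * (v ⬝ᵥ Sig.mulVec v))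
              = (κ ^ ((1:ℝ)/2) * κ ^ ((1:ℝ)/2)) * ((u ⬝ᵥ Sig.mulVec u) * (v ⬝ᵥ Sig.mulVec v))
              by ring, ← Real.rpow_add hκ]
          norm_num
  -- the second conclusion (and integrability), by decomposing M
  have main2 : ∀ M : Matrix (Fin d) (Fin d) ℝ, M.PosSemidef → ∀ z : Fin d → ℝ,
      Integrable (fun ω => (x ω ⬝ᵥ M.mulVec (x ω)) * (z ⬝ᵥ x ω) ^ 2) P ∧
      ∫ ω, (x ω ⬝ᵥ M.mulVec (x ω)) * (z ⬝ᵥ x ω) ^ 2 ∂P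
        ≤ κ * (M * Sig).trace * (z ⬝ᵥ Sig.mulVec z) := by
    intro M hM z
    obtain ⟨B, rfl⟩ : ∃ B : Matrix (Fin d) (Fin d) ℝ, M = Bᴴ * B := by
      open scoped MatrixOrder in
      exact CStarAlgebra.nonneg_iff_eq_star_mul_self.mp hM.nonneg
    have hfun : (fun ω => (x ω ⬝ᵥ (Bᴴ * B).mulVec (x ω)) * (z ⬝ᵥ x ω) ^ 2)
        = fun ω => ∑ i, (B i ⬝ᵥ x ω) ^ 2 * (z ⬝ᵥ x ω) ^ 2 := by
      funext ω; rw [quad_form_eq', Finset.sum_mul]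
    constructor
    · rw [hfun]; exact integrable_finset_sum _ fun i _ => hint2 (B i) z
    · rw [hfun, integral_finset_sum _ (fun i _ => hint2 (B i) z), trace_eq']
      calc ∑ i, ∫ ω, (B i ⬝ᵥ x ω) ^ 2 * (z ⬝ᵥ x ω) ^ 2 ∂P
          ≤ ∑ i, κ * ((B i ⬝ᵥ Sig.mulVec (B i)) * (z ⬝ᵥ Sig.mulVec z)) :=
            Finset.sum_le_sum fun i _ => key (B i) z
        _ = κ * (∑ i, B i ⬝ᵥ Sig.mulVec (B i)) * (z ⬝ᵥ Sig.mulVec z) := by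
            rw [mul_assoc, Finset.sum_mul, Finset.mul_sum]
  refine ⟨?_, fun M hM z => (main2 M hM z).2⟩
  intro M N hM hN
  obtain ⟨C, rfl⟩ : ∃ C : Matrix (Fin d) (Fin d) ℝ, N = Cᴴ * C := by
    open scoped MatrixOrder in
    exact CStarAlgebra.nonneg_iff_eq_star_mul_self.mp hN.nonneg
  have hfun : (fun ω => (x ω ⬝ᵥ M.mulVec (x ω)) * (x ω ⬝ᵥ (Cᴴ * C).mulVec (x ω)))
      = fun ω => ∑ j, (x ω ⬝ᵥ M.mulVec (x ω)) * (C j ⬝ᵥ x ω) ^ 2 := by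
    funext ω; rw [quad_form_eq', Finset.mul_sum]
  rw [hfun, integral_finset_sum _ (fun j _ => (main2 M hM (C j)).1), trace_eq']
  calc ∑ j, ∫ ω, (x ω ⬝ᵥ M.mulVec (x ω)) * (C j ⬝ᵥ x ω) ^ 2 ∂P
      ≤ ∑ j, κ * (M * Sig).trace * (C j ⬝ᵥ Sig.mulVec (C j)) :=
        Finset.sum_le_sum fun j _ => (main2 M hM (C j)).2
    _ = κ * (M * Sig).trace * ∑ j, C j ⬝ᵥ Sig.mulVec (C j) := by
        rw [Finset.mul_sum]
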